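/- The space Hom_{K[X]}(M, F) of K[X]-module homomorphisms from M to F is an F-vector space of dimension ν, and the subspace W = {f ∈ Hom_{K[X]}(M, F) : f vanishes on M'} has codimension equal to #{i : e_i = 1}, the number of indices i with e_i = 1. -/

import Mathlib

open Polynomial
set_option synthInstance.maxHeartbeats 1000000
set_option maxHeartbeats 1000000

namespace Stmt17Aux

variable {K : Type*} [Field K] (h : K[X])

-- every element of F = K[X]/(h) is killed by h • ·? no: h • x = 0
lemma h_smul_eq_zero (x : K[X] ⧸ Ideal.span {h}) : h • x = 0 := by
  obtain ⟨s, rfl⟩ := Submodule.Quotient.mk_surjective _ x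
  rw [← Submodule.Quotient.mk_smul, smul_eq_mul, Submodule.Quotient.mk_eq_zero]
  exact Ideal.mul_mem_right _ _ (Ideal.subset_span rfl)

lemma smul_eq_mk_mul (q : K[X]) (x : K[X] ⧸ Ideal.span {h}) :
    q • x = Submodule.Quotient.mk q * x := by
  obtain ⟨s, rfl⟩ := Submodule.Quotient.mk_surjective _ x
  rw [← Submodule.Quotient.mk_smul, smul_eq_mul, Ideal.Quotient.mk_eq_mk,
    Ideal.Quotient.mk_eq_mk, Ideal.Quotient.mk_eq_mk, ← map_mul]

lemma mk_eq_smul_one {I : Ideal K[X]} (p : K[X]) :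
    (Submodule.Quotient.mk p : K[X] ⧸ I) = p • (Submodule.Quotient.mk 1) := by
  rw [← Submodule.Quotient.mk_smul, smul_eq_mul, mul_one]

noncomputable def B (n : ℕ) (hn : 1 ≤ n) :
    (K[X] ⧸ Ideal.span {h ^ n}) →ₗ[K[X]] K[X] ⧸ Ideal.span {h} :=
  Submodule.liftQ (Ideal.span {h ^ n} : Ideal K[X]) (Submodule.mkQ (Ideal.span {h})) (by
    rw [Submodule.ker_mkQ]
    exact Ideal.span_singleton_le_span_singleton.2 (dvd_pow_self h (by omega)))

@[simp] lemma B_mk (n : ℕ) (hn : 1 ≤ n) (p : K[X]) :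
    B h n hn (Submodule.Quotient.mk p) = Submodule.Quotient.mk p := rfl

noncomputable def E (n : ℕ) (hn : 1 ≤ n) :
    ((K[X] ⧸ Ideal.span {h ^ n}) →ₗ[K[X]] K[X] ⧸ Ideal.span {h})
      ≃ₗ[K[X] ⧸ Ideal.span {h}] K[X] ⧸ Ideal.span {h} where
  toFun f := f (Submodule.Quotient.mk 1)
  map_add' f g := rfl
  map_smul' c f := rfl
  invFun c := c • B h n hn
  left_inv f := by
    refine Submodule.linearMap_qext _ (LinearMap.ext fun p => ?_)
    simp only [LinearMap.comp_apply, Submodule.mkQ_apply, LinearMap.smul_apply, B_mk]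
    rw [smul_eq_mul, mk_eq_smul_one (I := Ideal.span {h ^ n}) p, map_smul,
      smul_eq_mk_mul, mul_comm]
  right_inv c := by
    simp only [LinearMap.smul_apply, B_mk, smul_eq_mul]
    rw [show (Submodule.Quotient.mk 1 : K[X] ⧸ Ideal.span {h}) = 1 from rfl, mul_one]

/-- pi of submodules is equivalent to the product of the submodules. -/
def piSubEquiv {R : Type*} [Semiring R] {ι : Type*} {φ : ι → Type*}
    [∀ i, AddCommMonoid (φ i)] [∀ i, Module R (φ i)] (p : ∀ i, Submodule R (φ i)) :
    (∀ i, p i) ≃ₗ[R] (Submodule.pi Set.univ p) where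
  toFun x := ⟨fun i => x i, fun i _ => (x i).2⟩
  map_add' x y := rfl
  map_smul' c x := rfl
  invFun y i := ⟨y.1 i, y.2 i trivial⟩
  left_inv x := rfl
  right_inv y := rfl


end Stmt17Aux

open Polynomial in
set_option synthInstance.maxHeartbeats 1000000 in
set_option maxHeartbeats 10000000 in
theorem stmt17_main (K : Type*) [Field K] (h : K[X]) (hirr : Irreducible h)
    (ν : ℕ) (e : Fin ν → ℕ) (he : ∀ i, 1 ≤ e i)
    (W : Submodule (K[X] ⧸ Ideal.span {h})
      ((∀ i : Fin ν, K[X] ⧸ Ideal.span {h ^ e i}) →ₗ[K[X]] K[X] ⧸ Ideal.span {h}))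
    (hW : ∀ f, f ∈ W ↔ ∀ a : (∀ i : Fin ν, K[X] ⧸ Ideal.span {h ^ e i}),
      h • a = 0 → f a = 0) :
    Module.finrank (K[X] ⧸ Ideal.span {h})
        ((∀ i : Fin ν, K[X] ⧸ Ideal.span {h ^ e i}) →ₗ[K[X]] K[X] ⧸ Ideal.span {h}) = ν ∧
    Module.finrank (K[X] ⧸ Ideal.span {h}) W +
      (Finset.univ.filter (fun i => e i = 1)).card = ν := by
  classical
  haveI hmax : (Ideal.span {h}).IsMaximal :=
    PrincipalIdealRing.isMaximal_of_irreducible hirr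
  haveI : Nontrivial (K[X] ⧸ Ideal.span {h}) := Ideal.Quotient.nontrivial_iff.mpr hmax.ne_top
  -- the main equivalence
  let Φ : ((∀ i : Fin ν, K[X] ⧸ Ideal.span {h ^ e i}) →ₗ[K[X]] K[X] ⧸ Ideal.span {h})
      ≃ₗ[K[X] ⧸ Ideal.span {h}] (Fin ν → K[X] ⧸ Ideal.span {h}) :=
    (LinearMap.lsum K[X] (fun i : Fin ν => K[X] ⧸ Ideal.span {h ^ e i})
      (K[X] ⧸ Ideal.span {h})).symm.trans
      (LinearEquiv.piCongrRight fun i => Stmt17Aux.E h (e i) (he i))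
  have hΦ : ∀ f i, Φ f i = f (Pi.single i (Submodule.Quotient.mk 1)) := fun f i => rfl
  have hrank : Module.finrank (K[X] ⧸ Ideal.span {h})
      ((∀ i : Fin ν, K[X] ⧸ Ideal.span {h ^ e i}) →ₗ[K[X]] K[X] ⧸ Ideal.span {h}) = ν := by
    rw [Φ.finrank_eq, Module.finrank_pi, Fintype.card_fin]
  refine ⟨hrank, ?_⟩
  clear_value Φ
  -- the target submodule
  set p : Fin ν → Submodule (K[X] ⧸ Ideal.span {h}) (K[X] ⧸ Ideal.span {h}) :=
    fun i => if e i = 1 then ⊥ else ⊤ with hp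
  clear_value p
  -- key characterization of W
  have key : ∀ f : ((∀ i : Fin ν, K[X] ⧸ Ideal.span {h ^ e i}) →ₗ[K[X]] K[X] ⧸ Ideal.span {h}),
      (∀ a : (∀ i : Fin ν, K[X] ⧸ Ideal.span {h ^ e i}), h • a = 0 → f a = 0) ↔
      ∀ i, e i = 1 → f (Pi.single i (Submodule.Quotient.mk 1)) = 0 := by
    intro f
    constructor
    · intro hf i hi
      refine hf _ ?_
      funext j
      rw [Pi.smul_apply, Pi.zero_apply]
      by_cases hji : j = i
      · subst hji
        rw [Pi.single_eq_same, ← Submodule.Quotient.mk_smul, smul_eq_mul, mul_one,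
          Submodule.Quotient.mk_eq_zero, hi, pow_one]
        exact Ideal.subset_span rfl
      · rw [Pi.single_eq_of_ne hji, smul_zero]
    · intro hf a ha
      have ha' : ∀ i, h • a i = 0 := fun i => by
        have := congrFun ha i
        simpa using this
      rw [← Finset.univ_sum_single a, map_sum]
      refine Finset.sum_eq_zero fun i _ => ?_
      obtain ⟨q, hq⟩ := Submodule.Quotient.mk_surjective _ (a i)
      have hsingle : ∀ (c : K[X]) (y : K[X] ⧸ Ideal.span {h ^ e i}),
          f (Pi.single i (c • y)) = c • f (Pi.single i y) := fun c y => by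
        have h1 := (f.comp
          (LinearMap.single K[X] (fun j => K[X] ⧸ Ideal.span {h ^ e j}) i)).map_smul c y
        simp only [LinearMap.comp_apply, LinearMap.coe_single] at h1
        exact h1
      by_cases hi : e i = 1
      · rw [← hq, Stmt17Aux.mk_eq_smul_one, hsingle, hf i hi, smul_zero]
      · have h2 : 2 ≤ e i := by have := he i; omega
        have hdvd : h ^ e i ∣ h * q := by
          have := ha' i
          rw [← hq, ← Submodule.Quotient.mk_smul, smul_eq_mul,
            Submodule.Quotient.mk_eq_zero, Ideal.mem_span_singleton] at this
          exact this
        have hdvd' : h ^ (e i - 1) ∣ q := by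
          have hne : h ≠ 0 := hirr.ne_zero
          have hpow : h * h ^ (e i - 1) = h ^ e i := by
            rw [← pow_succ']
            congr 1
            omega
          refine (mul_dvd_mul_iff_left hne).mp ?_
          rw [hpow]
          exact hdvd
        obtain ⟨r, hr⟩ := hdvd'
        have hkill : ∀ x : K[X] ⧸ Ideal.span {h}, h ^ (e i - 1) • x = 0 := by
          intro x
          obtain ⟨m, hm⟩ : ∃ m, e i - 1 = m + 1 := ⟨e i - 2, by omega⟩
          rw [hm, pow_succ', mul_smul]
          exact Stmt17Aux.h_smul_eq_zero h _
        rw [← hq, hr, Stmt17Aux.mk_eq_smul_one, hsingle, mul_smul, hkill]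
  -- identify W with the preimage of the pi submodule
  have hWV : W = Submodule.comap Φ.toLinearMap
      (Submodule.pi Set.univ p) := by
    ext f
    rw [hW, key, Submodule.mem_comap, Submodule.mem_pi]
    simp only [LinearEquiv.coe_coe, LinearEquiv.coe_toLinearMap]
    constructor
    · intro H i _
      by_cases hi : e i = 1
      · rw [hΦ]
        simp only [hp, hi, if_true, Submodule.mem_bot]
        exact H i hi
      · simp only [hp, hi, if_false]
        exact Submodule.mem_top
    · intro H i hi
      have := H i trivial
      rw [hΦ] at this
      simpa only [hp, hi, if_true, Submodule.mem_bot] using this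
  have t1 : Module.finrank (K[X] ⧸ Ideal.span {h})
      (Submodule.comap Φ.toLinearMap (Submodule.pi Set.univ p))
      = Module.finrank (K[X] ⧸ Ideal.span {h}) (Submodule.pi Set.univ p) :=
    (Φ.ofSubmodule' (Submodule.pi Set.univ p)).finrank_eq
  have t2 : Module.finrank (K[X] ⧸ Ideal.span {h}) (Submodule.pi Set.univ p)
      = Module.finrank (K[X] ⧸ Ideal.span {h}) (∀ i, p i) :=
    (Stmt17Aux.piSubEquiv p).symm.finrank_eq
  haveI hfin : ∀ i, Module.Finite (K[X] ⧸ Ideal.span {h}) (p i) := fun i => by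
    rw [hp]; dsimp only; split_ifs <;> infer_instance
  haveI hfree : ∀ i, Module.Free (K[X] ⧸ Ideal.span {h}) (p i) := fun i => by
    rw [hp]; dsimp only
    letI := Ideal.Quotient.field (Ideal.span {h})
    split_ifs <;> infer_instance
  have t3 : Module.finrank (K[X] ⧸ Ideal.span {h}) (∀ i, p i)
      = ∑ i, Module.finrank (K[X] ⧸ Ideal.span {h}) (p i) :=
    Module.finrank_pi_fintype _
  have hrankW : Module.finrank (K[X] ⧸ Ideal.span {h}) W =
      ∑ i, Module.finrank (K[X] ⧸ Ideal.span {h}) (p i) := by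
    rw [hWV]
    exact t1.trans (t2.trans t3)
  rw [hrankW]
  have hsum : ∑ i, Module.finrank (K[X] ⧸ Ideal.span {h}) (p i) =
      (Finset.univ.filter (fun i => ¬ e i = 1)).card := by
    rw [Finset.card_filter]
    refine Finset.sum_congr rfl fun i _ => ?_
    by_cases hi : e i = 1
    · simp [hp, hi]
    · rw [hp]
      dsimp only
      beta_reduce
      rw [if_neg hi, finrank_top, Module.finrank_self, if_pos hi]
  rw [hsum, add_comm, Finset.card_filter_add_card_filter_not, Finset.card_univ,
    Fintype.card_fin]

open Polynomial in
set_option synthInstance.maxHeartbeats 1000000 in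
set_option maxHeartbeats 1000000 in
/-- Let `h ∈ K[X]` be irreducible, `F = K[X]/(h)`, and `M = ⊕_{i=1}^{ν} K[X]/(h^{e_i})` with
each `e_i ≥ 1`. Then `Hom_{K[X]}(M, F)` is an `F`-vector space of dimension `ν`, and the
subspace `W` of homomorphisms vanishing on `M' = {a ∈ M : h·a = 0}` has codimension
`#{i : e_i = 1}`. -/
theorem stmt_17 (K : Type*) [Field K] (h : K[X]) (hirr : Irreducible h)
    (ν : ℕ) (e : Fin ν → ℕ) (he : ∀ i, 1 ≤ e i)
    (W : Submodule (K[X] ⧸ Ideal.span {h})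
      ((∀ i : Fin ν, K[X] ⧸ Ideal.span {h ^ e i}) →ₗ[K[X]] K[X] ⧸ Ideal.span {h}))
    (hW : ∀ f, f ∈ W ↔ ∀ a : (∀ i : Fin ν, K[X] ⧸ Ideal.span {h ^ e i}),
      h • a = 0 → f a = 0) :
    Module.finrank (K[X] ⧸ Ideal.span {h})
        ((∀ i : Fin ν, K[X] ⧸ Ideal.span {h ^ e i}) →ₗ[K[X]] K[X] ⧸ Ideal.span {h}) = ν ∧
    Module.finrank (K[X] ⧸ Ideal.span {h}) W +
      (Finset.univ.filter (fun i => e i = 1)).card = ν :=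
  stmt17_main K h hirr ν e he W hW
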